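/- Let S ⊆ M'. Then every point x = x̄ + Σ_{j∈N} x_j r^j of P^B ∖ S_k^C (with all x_j ≥ 0) satisfies Σ_{i∈S} x_i − Σ_{j∈N∖J} x_j/ε'_j(S) ≤ 0 (using the convention x/(+∞) := 0). -/

import Mathlib

open Set Pointwise

noncomputable section

variable {n : ℕ} {ι : Type*} [Fintype ι]

/-- Recession cone of a set `A`. -/
def recc (A : Set (Fin n → ℝ)) : Set (Fin n → ℝ) :=
  {d | ∀ a ∈ A, ∀ t : ℝ, 0 ≤ t → a + t • d ∈ A}

/-- The translated simplicial cone `P^B = {x̄ + Σ_j x_j r^j : x_j ≥ 0}`. -/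
def PBset (xb : Fin n → ℝ) (r : ι → Fin n → ℝ) : Set (Fin n → ℝ) :=
  {x | ∃ c : ι → ℝ, (∀ j, 0 ≤ c j) ∧ x = xb + ∑ j, c j • r j}

/-- The recession cone of `P^B`, i.e. `{Σ_j t_j r^j : t_j ≥ 0}`. -/
def reccPBset (r : ι → Fin n → ℝ) : Set (Fin n → ℝ) :=
  {x | ∃ t : ι → ℝ, (∀ j, 0 ≤ t j) ∧ x = ∑ j, t j • r j}

/-- `λ⁻ = inf {λ ≥ 0 : x̄ + λ d ∈ C}` (`+∞` if the halfline misses `C`). -/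
noncomputable def lamM (xb d : Fin n → ℝ) (C : Set (Fin n → ℝ)) : EReal :=
  sInf ((fun l : ℝ => (l : EReal)) '' {l : ℝ | 0 ≤ l ∧ xb + l • d ∈ C})

/-- `λ⁺ = sup {λ ≥ 0 : x̄ + λ d ∈ C}` (`−∞` if the halfline misses `C`). -/
noncomputable def lamP (xb d : Fin n → ℝ) (C : Set (Fin n → ℝ)) : EReal :=
  sSup ((fun l : ℝ => (l : EReal)) '' {l : ℝ | 0 ≤ l ∧ xb + l • d ∈ C})

/-- `N₀`: indices whose halfline misses `C`. -/
def N0set (xb : Fin n → ℝ) (r : ι → Fin n → ℝ) (C : Set (Fin n → ℝ)) : Set ι :=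
  {j | ∀ l : ℝ, 0 ≤ l → xb + l • r j ∉ C}

/-- `N₁`: indices with `0 < λ⁻ < +∞` and `λ⁺ = +∞`. -/
def N1set (xb : Fin n → ℝ) (r : ι → Fin n → ℝ) (C : Set (Fin n → ℝ)) : Set ι :=
  {j | 0 < lamM xb (r j) C ∧ lamM xb (r j) C < ⊤ ∧ lamP xb (r j) C = ⊤}

/-- `N₂`: indices with `0 < λ⁻ < +∞` and `λ⁻ < λ⁺ < +∞`. -/
def N2set (xb : Fin n → ℝ) (r : ι → Fin n → ℝ) (C : Set (Fin n → ℝ)) : Set ι :=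
  {j | 0 < lamM xb (r j) C ∧ lamM xb (r j) C < ⊤ ∧
    lamM xb (r j) C < lamP xb (r j) C ∧ lamP xb (r j) C < ⊤}

/-- `S_k^C = {x̄} + conv(⋃_{j∈N₂} {λ r^j : 0 ≤ λ < λ⁺_j}) + {λ r^k : λ ≤ 0} + recc(C)`. -/
def SkCset (xb : Fin n → ℝ) (r : ι → Fin n → ℝ) (C : Set (Fin n → ℝ)) (k : ι) :
    Set (Fin n → ℝ) :=
  {xb} + convexHull ℝ (⋃ j ∈ N2set xb r C,
      {y : Fin n → ℝ | ∃ l : ℝ, 0 ≤ l ∧ (l : EReal) < lamP xb (r j) C ∧ y = l • r j})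
    + {y : Fin n → ℝ | ∃ l : ℝ, l ≤ 0 ∧ y = l • r k}
    + recc C

/-- `J = {i ∈ N : r^i ∈ recc(S_k^C)}`. -/
def Jset (xb : Fin n → ℝ) (r : ι → Fin n → ℝ) (C : Set (Fin n → ℝ)) (k : ι) : Set ι :=
  {i | r i ∈ recc (SkCset xb r C k)}

/-- `γ'_{ij} = sup {γ ≥ 0 : r^i + γ r^j ∈ recc(S_k^C)}` (`+∞` if unbounded). -/
noncomputable def gam' (xb : Fin n → ℝ) (r : ι → Fin n → ℝ) (C : Set (Fin n → ℝ))
    (k i j : ι) : EReal :=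
  sSup ((fun g : ℝ => (g : EReal)) ''
    {g : ℝ | 0 ≤ g ∧ r i + g • r j ∈ recc (SkCset xb r C k)})

/-- `M' = {i ∈ J : γ'_{ij} > 0 for all j ∈ N∖J}`. -/
def M'set (xb : Fin n → ℝ) (r : ι → Fin n → ℝ) (C : Set (Fin n → ℝ)) (k : ι) : Set ι :=
  {i | i ∈ Jset xb r C k ∧ ∀ j, j ∉ Jset xb r C k → 0 < gam' xb r C k i j}

/-- `ε'_j(S) = min_{i∈S} γ'_{ij}` for `S ≠ ∅`, and `+∞` for `S = ∅` (via `sInf ∅ = ⊤`). -/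
noncomputable def eps' (xb : Fin n → ℝ) (r : ι → Fin n → ℝ) (C : Set (Fin n → ℝ))
    (k : ι) (S : Finset ι) (j : ι) : EReal :=
  sInf ((fun i => gam' xb r C k i j) '' (S : Set ι))

open scoped Classical

lemma zero_mem_recc (A : Set (Fin n → ℝ)) : (0 : Fin n → ℝ) ∈ recc A := by
  intro a ha t ht; simpa using ha

lemma recc_add {A : Set (Fin n → ℝ)} {d₁ d₂ : Fin n → ℝ}
    (h₁ : d₁ ∈ recc A) (h₂ : d₂ ∈ recc A) : d₁ + d₂ ∈ recc A := by
  intro a ha t ht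
  have h := h₂ (a + t • d₁) (h₁ a ha t ht) t ht
  simpa [smul_add, add_assoc] using h

lemma recc_smul {A : Set (Fin n → ℝ)} {d : Fin n → ℝ}
    (h : d ∈ recc A) {s : ℝ} (hs : 0 ≤ s) : s • d ∈ recc A := by
  intro a ha t ht
  have h' := h a ha (t * s) (mul_nonneg ht hs)
  simpa [smul_smul] using h'

lemma recc_sum {A : Set (Fin n → ℝ)} {κ : Type*} {t : Finset κ} {f : κ → Fin n → ℝ}
    (h : ∀ i ∈ t, f i ∈ recc A) : ∑ i ∈ t, f i ∈ recc A := by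
  classical
  induction t using Finset.induction with
  | empty => simpa using zero_mem_recc A
  | @insert x s hx ih =>
    rw [Finset.sum_insert hx]
    exact recc_add (h x (Finset.mem_insert_self x s))
      (ih fun i hi => h i (Finset.mem_insert_of_mem hi))

lemma recc_convex {A : Set (Fin n → ℝ)} (hA : Convex ℝ A) : Convex ℝ (recc A) := by
  intro d₁ h₁ d₂ h₂ a b ha hb hab p hp t ht
  have e : a • (p + t • d₁) + b • (p + t • d₂) = (a + b) • p + t • (a • d₁ + b • d₂) := by
    module
  rw [hab, one_smul] at e
  rw [show p + t • (a • d₁ + b • d₂) = a • (p + t • d₁) + b • (p + t • d₂) from e.symm]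
  exact hA (h₁ p hp t ht) (h₂ p hp t ht) ha hb hab

lemma SkC_convex (xb : Fin n → ℝ) (r : ι → Fin n → ℝ) {C : Set (Fin n → ℝ)}
    (hC : Convex ℝ C) (k : ι) : Convex ℝ (SkCset xb r C k) := by
  unfold SkCset
  refine Convex.add (Convex.add (Convex.add (convex_singleton xb)
    (convex_convexHull ℝ _)) ?_) (recc_convex hC)
  rintro x ⟨l₁, hl₁, rfl⟩ y ⟨l₂, hl₂, rfl⟩ a b ha hb hab
  exact ⟨a * l₁ + b * l₂, by nlinarith, by rw [add_smul, smul_smul, smul_smul]⟩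

lemma xb_mem_SkC (xb : Fin n → ℝ) (r : ι → Fin n → ℝ) (C : Set (Fin n → ℝ)) {k : ι}
    (hk : k ∈ N2set xb r C) : xb ∈ SkCset xb r C k := by
  have h0 : (0 : Fin n → ℝ) ∈ convexHull ℝ (⋃ j ∈ N2set xb r C,
      {y : Fin n → ℝ | ∃ l : ℝ, 0 ≤ l ∧ (l : EReal) < lamP xb (r j) C ∧ y = l • r j}) := by
    apply subset_convexHull
    refine mem_iUnion₂.mpr ⟨k, hk, 0, le_refl 0, ?_, (zero_smul ℝ _).symm⟩
    calc ((0 : ℝ) : EReal) < lamM xb (r k) C := by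
          have := hk.1; simpa using this
      _ < lamP xb (r k) C := hk.2.2.1
  have hmem : xb + 0 + 0 + 0 ∈ SkCset xb r C k :=
    Set.add_mem_add (Set.add_mem_add (Set.add_mem_add (Set.mem_singleton xb) h0)
      ⟨0, le_refl 0, (zero_smul ℝ _).symm⟩) (zero_mem_recc C)
  simpa using hmem

lemma mem_recc_of_lt_gam (xb : Fin n → ℝ) (r : ι → Fin n → ℝ) {C : Set (Fin n → ℝ)}
    (hCconv : Convex ℝ C) (k i j : ι) (hi : r i ∈ recc (SkCset xb r C k))
    {g : ℝ} (hg : 0 ≤ g) (hlt : (g : EReal) < gam' xb r C k i j) :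
    r i + g • r j ∈ recc (SkCset xb r C k) := by
  obtain ⟨y, hy, hgy⟩ := lt_sSup_iff.mp hlt
  obtain ⟨g', ⟨hg'0, hg'mem⟩, rfl⟩ := hy
  rw [EReal.coe_lt_coe_iff] at hgy
  have hg'pos : 0 < g' := lt_of_le_of_lt hg hgy
  have hconv := recc_convex (SkC_convex xb r hCconv k)
  have ha : (0 : ℝ) ≤ 1 - g / g' := by
    rw [sub_nonneg]; exact (div_le_one hg'pos).mpr hgy.le
  have hb : (0 : ℝ) ≤ g / g' := div_nonneg hg hg'pos.le
  have hcomb := hconv hi hg'mem ha hb (by ring)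
  have he : (1 - g / g') • r i + (g / g') • (r i + g' • r j) = r i + g • r j := by
    rw [smul_add, smul_smul, div_mul_cancel₀ _ hg'pos.ne', ← add_assoc, ← add_smul,
      sub_add_cancel, one_smul]
  rwa [he] at hcomb

/-- Theorem 6. For `S ⊆ M'`, every point `x = x̄ + Σ_j x_j r^j` of
`P^B ∖ S_k^C` satisfies `Σ_{i∈S} x_i − Σ_{j∈N∖J} x_j/ε'_j(S) ≤ 0`
(convention `x/(+∞) := 0`, realized via `EReal.toReal ⊤ = 0` and `x/0 = 0`). -/
theorem stmt17 (xb : Fin n → ℝ) (r : ι → Fin n → ℝ) (hr : LinearIndependent ℝ r)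
    (C : Set (Fin n → ℝ)) (hCopen : IsOpen C) (hCconv : Convex ℝ C)
    (hxb : xb ∉ closure C) (hrecc : recc C ⊆ reccPBset r)
    (k : ι) (hk : k ∈ N2set xb r C)
    (S : Finset ι) (hS : (S : Set ι) ⊆ M'set xb r C k)
    (c : ι → ℝ) (hc : ∀ j, 0 ≤ c j)
    (hx : xb + ∑ j, c j • r j ∉ SkCset xb r C k) :
    ∑ i ∈ S, c i
      - ∑ j ∈ Finset.univ.filter (fun j => j ∉ Jset xb r C k),
          c j / (eps' xb r C k S j).toReal ≤ 0 := by
  classical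
  rcases S.eq_empty_or_nonempty with rfl | hSne
  · simp [eps', sInf_empty]
  by_contra hcon
  rw [not_le] at hcon
  set NJ : Finset ι := Finset.univ.filter (fun j => j ∉ Jset xb r C k) with hNJdef
  set T : ℝ := ∑ i ∈ S, c i with hTdef
  set E : ℝ := ∑ j ∈ NJ, c j / (eps' xb r C k S j).toReal with hEdef
  have hNJprop : ∀ j ∈ NJ, j ∉ Jset xb r C k := fun j hj => (Finset.mem_filter.mp hj).2
  have heps_pos : ∀ j, j ∉ Jset xb r C k → 0 < eps' xb r C k S j := by
    intro j hj
    have hne : ((fun i => gam' xb r C k i j) '' (S : Set ι)).Nonempty :=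
      (Finset.coe_nonempty.mpr hSne).image _
    have hfin : ((fun i => gam' xb r C k i j) '' (S : Set ι)).Finite :=
      S.finite_toSet.image _
    obtain ⟨i, hiS, heq⟩ := hne.csInf_mem hfin
    unfold eps'
    rw [← heq]
    exact (hS hiS).2 j hj
  have heps_le : ∀ j : ι, ∀ i ∈ S, eps' xb r C k S j ≤ gam' xb r C k i j := by
    intro j i hi
    exact sInf_le ⟨i, Finset.mem_coe.mpr hi, rfl⟩
  have htoReal_nonneg : ∀ j, j ∉ Jset xb r C k → 0 ≤ (eps' xb r C k S j).toReal := by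
    intro j hj
    rcases eq_or_ne (eps' xb r C k S j) ⊤ with h | h
    · simp [h]
    · have h2 := EReal.toReal_le_toReal (heps_pos j hj).le (by simp) h
      simpa using h2
  have hE0 : 0 ≤ E := by
    refine Finset.sum_nonneg fun j hj => ?_
    exact div_nonneg (hc j) (htoReal_nonneg j (hNJprop j hj))
  have hT : 0 < T := by linarith
  have hTne : T ≠ 0 := hT.ne'
  set δ : ℝ := (T - E) / (NJ.card + 1) with hδdef
  have hδ : 0 < δ := div_pos hcon (by positivity)
  have key : ∀ j : ι, ∃ bj : ℝ, j ∉ Jset xb r C k →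
      0 < bj ∧ (bj : EReal) < eps' xb r C k S j ∧
      c j / bj ≤ c j / (eps' xb r C k S j).toReal + δ := by
    intro j
    by_cases hj : j ∉ Jset xb r C k
    · have hpos := heps_pos j hj
      rcases eq_or_ne (eps' xb r C k S j) ⊤ with htop | htop
      · refine ⟨max 1 ((c j + 1) / δ), fun _ =>
          ⟨lt_of_lt_of_le one_pos (le_max_left _ _), ?_, ?_⟩⟩
        · rw [htop]; exact EReal.coe_lt_top _
        · rw [htop]
          simp only [EReal.toReal_top, div_zero, zero_add]
          have hbpos : (0:ℝ) < max 1 ((c j + 1) / δ) :=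
            lt_of_lt_of_le one_pos (le_max_left _ _)
          rw [div_le_iff₀ hbpos]
          have h2 : δ * ((c j + 1) / δ) = c j + 1 := by field_simp
          have h3 : δ * ((c j + 1) / δ) ≤ δ * max 1 ((c j + 1) / δ) :=
            mul_le_mul_of_nonneg_left (le_max_right _ _) hδ.le
          nlinarith [hc j]
      · have hbot : eps' xb r C k S j ≠ ⊥ := ne_bot_of_gt hpos
        set e : ℝ := (eps' xb r C k S j).toReal with hedef
        have hecoe : ((e : ℝ) : EReal) = eps' xb r C k S j := EReal.coe_toReal htop hbot
        have hepos : 0 < e := by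
          have h0 : ((0:ℝ) : EReal) < ((e:ℝ) : EReal) := by
            rw [hecoe]; simpa using hpos
          exact_mod_cast h0
        have hden : 0 < c j + δ * e := by nlinarith [hc j]
        have hnum : 0 < e * (c j + δ * e / 2) := by nlinarith [hc j]
        refine ⟨e * (c j + δ * e / 2) / (c j + δ * e), fun _ => ⟨?_, ?_, ?_⟩⟩
        · exact div_pos hnum hden
        · rw [← hecoe, EReal.coe_lt_coe_iff]
          rw [div_lt_iff₀ hden]
          nlinarith [hc j, mul_pos hepos (mul_pos hδ hepos)]
        · have hbpos : 0 < e * (c j + δ * e / 2) / (c j + δ * e) := div_pos hnum hden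
          rw [div_le_iff₀ hbpos]
          have hkey : (c j / e + δ) * (e * (c j + δ * e / 2) / (c j + δ * e))
              = c j + δ * e / 2 := by
            rw [mul_div_assoc', div_eq_iff hden.ne']
            field_simp
          nlinarith [hc j]
    · exact ⟨1, fun h' => absurd h' hj⟩
  choose b hb using key
  set w : ι → ℝ := fun j => c j / b j with hwdef
  set σ : ℝ := ∑ j ∈ NJ, w j with hσdef
  have hw0 : ∀ j ∈ NJ, 0 ≤ w j := fun j hj =>
    div_nonneg (hc j) (hb j (hNJprop j hj)).1.le
  have hσT : σ ≤ T := by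
    have h1 : σ ≤ ∑ j ∈ NJ, (c j / (eps' xb r C k S j).toReal + δ) :=
      Finset.sum_le_sum fun j hj => (hb j (hNJprop j hj)).2.2
    have h2 : ∑ j ∈ NJ, (c j / (eps' xb r C k S j).toReal + δ) = E + NJ.card * δ := by
      rw [Finset.sum_add_distrib, Finset.sum_const, nsmul_eq_mul, hEdef]
    have h3 : (NJ.card : ℝ) * δ ≤ T - E := by
      rw [hδdef]
      have hle : (NJ.card : ℝ) / (NJ.card + 1) ≤ 1 := by
        rw [div_le_one (by positivity)]; linarith
      calc (NJ.card : ℝ) * ((T - E) / (NJ.card + 1))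
          = ((NJ.card : ℝ) / (NJ.card + 1)) * (T - E) := by ring
        _ ≤ 1 * (T - E) := mul_le_mul_of_nonneg_right hle hcon.le
        _ = T - E := one_mul _
    linarith
  set u : Fin n → ℝ := ∑ i ∈ S, c i • r i with hudef
  have hiJ : ∀ i ∈ S, r i ∈ recc (SkCset xb r C k) := fun i hi =>
    (hS (Finset.mem_coe.mpr hi)).1
  have hu : u ∈ recc (SkCset xb r C k) := recc_sum fun i hi => recc_smul (hiJ i hi) (hc i)
  set J' : Finset ι := Finset.univ.filter (fun j => j ∈ Jset xb r C k) with hJ'def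
  have hSJ' : S ⊆ J' := fun i hi =>
    Finset.mem_filter.mpr ⟨Finset.mem_univ i, (hS (Finset.mem_coe.mpr hi)).1⟩
  have hmem1 : (∑ i ∈ J' \ S, c i • r i) ∈ recc (SkCset xb r C k) := by
    refine recc_sum fun i hi => recc_smul ?_ (hc i)
    exact (Finset.mem_filter.mp (Finset.mem_sdiff.mp hi).1).2
  have hmem2 : ((1 - σ / T) • u) ∈ recc (SkCset xb r C k) := by
    refine recc_smul hu ?_
    rw [sub_nonneg]
    exact (div_le_one hT).mpr hσT
  have hmem3 : ∀ j ∈ NJ, (∑ i ∈ S, (w j * (c i / T)) • (r i + b j • r j))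
      ∈ recc (SkCset xb r C k) := by
    intro j hj
    have hj' := hNJprop j hj
    refine recc_sum fun i hi =>
      recc_smul ?_ (mul_nonneg (hw0 j hj) (div_nonneg (hc i) hT.le))
    refine mem_recc_of_lt_gam xb r hCconv k i j (hiJ i hi) (hb j hj').1.le ?_
    exact lt_of_lt_of_le (hb j hj').2.1 (heps_le j i hi)
  have hD : (∑ i ∈ J' \ S, c i • r i) + (1 - σ / T) • u
      + (∑ j ∈ NJ, ∑ i ∈ S, (w j * (c i / T)) • (r i + b j • r j))
      ∈ recc (SkCset xb r C k) :=
    recc_add (recc_add hmem1 hmem2) (recc_sum hmem3)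
  have hstep : ∀ j ∈ NJ, (∑ i ∈ S, (w j * (c i / T)) • (r i + b j • r j))
      = (w j / T) • u + c j • r j := by
    intro j hj
    have hbne : b j ≠ 0 := (hb j (hNJprop j hj)).1.ne'
    have hwb : w j * b j = c j := div_mul_cancel₀ (c j) hbne
    have h1 : ∀ i ∈ S, (w j * (c i / T)) • (r i + b j • r j)
        = (w j / T) • (c i • r i) + (c i * (c j / T)) • r j := by
      intro i _
      rw [smul_add]
      simp only [smul_smul]
      congr 1
      · congr 1; ring
      · congr 1; rw [← hwb]; ring
    rw [Finset.sum_congr rfl h1, Finset.sum_add_distrib, ← Finset.smul_sum, ← Finset.sum_smul]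
    congr 1
    congr 1
    rw [← Finset.sum_mul, ← hTdef]
    field_simp
  have hdouble : (∑ j ∈ NJ, ∑ i ∈ S, (w j * (c i / T)) • (r i + b j • r j))
      = (σ / T) • u + ∑ j ∈ NJ, c j • r j := by
    rw [Finset.sum_congr rfl hstep, Finset.sum_add_distrib, ← Finset.sum_smul,
      ← Finset.sum_div, ← hσdef]
  have hsplit : (∑ i ∈ J' \ S, c i • r i) + u = ∑ i ∈ J', c i • r i := by
    rw [hudef]
    exact Finset.sum_sdiff hSJ'
  have huniv : (∑ i ∈ J', c i • r i) + (∑ j ∈ NJ, c j • r j) = ∑ j, c j • r j := by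
    rw [hJ'def, hNJdef]
    exact Finset.sum_filter_add_sum_filter_not _ _ _
  have hDeq : (∑ i ∈ J' \ S, c i • r i) + (1 - σ / T) • u
      + (∑ j ∈ NJ, ∑ i ∈ S, (w j * (c i / T)) • (r i + b j • r j)) = ∑ j, c j • r j := by
    rw [hdouble, ← huniv, ← hsplit]
    module
  rw [hDeq] at hD
  have hfin := hD xb (xb_mem_SkC xb r C hk) 1 zero_le_one
  rw [one_smul] at hfin
  exact hx hfin
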